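/- Under the same setup (C nonnegative with zero diagonal and positive off-diagonal entries, $x \geq 0$ nonzero, $\gamma > 0$, $\delta > 0$, $n \geq 2$, and assuming $x^\top C \mathbf{1} > 0$), if $\lambda > \frac{[2 \max_{i,j}|H_{ij}| + \gamma \log(\frac{1}{\delta} x^\top C \mathbf{1})]_+}{\min_{i \neq j} C_{ij}}$ then $g'(\lambda) < 0$; consequently any maximizer $\lambda^\star \geq 0$ of $g$ satisfies $\lambda^\star \leq \frac{[2\max_{i,j}|H_{ij}| + \gamma \log(\frac{1}{\delta} x^\top C \mathbf{1})]_+}{\min_{i\neq j} C_{ij}}$. -/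

import Mathlib

open Finset

/-- The smooth (entropically regularized) dual objective. -/
noncomputable def smoothDual' {n : ℕ} (H C : Matrix (Fin n) (Fin n) ℝ)
    (x : Fin n → ℝ) (δ γ : ℝ) (lam : ℝ) : ℝ :=
  -(lam * δ) + γ * ∑ i ∈ Finset.univ.filter (fun i => 0 < x i), x i * Real.log (x i)
    - γ * ∑ i, x i * Real.log (∑ j, Real.exp (-(H i j + lam * C i j) / γ))

lemma hasDeriv_aux {n : ℕ} (hn : 0 < n) (H C : Matrix (Fin n) (Fin n) ℝ)
    (x : Fin n → ℝ) (γ : ℝ) (δ : ℝ) (lam : ℝ) :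
    HasDerivAt (smoothDual' H C x δ γ)
      (-δ - γ * ∑ i, x i *
        ((∑ j, Real.exp (-(H i j + lam * C i j) / γ) * (-C i j / γ)) /
          (∑ j, Real.exp (-(H i j + lam * C i j) / γ)))) lam := by
  have hZ : ∀ i, 0 < ∑ j, Real.exp (-(H i j + lam * C i j) / γ) := fun i =>
    Finset.sum_pos (fun j _ => Real.exp_pos _) ⟨⟨0, hn⟩, Finset.mem_univ _⟩
  have h1 : HasDerivAt (fun l : ℝ => -(l * δ)) (-δ) lam := by
    simpa using ((hasDerivAt_id lam).mul_const δ).fun_neg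
  have h2 : ∀ i j : Fin n, HasDerivAt (fun l : ℝ => Real.exp (-(H i j + l * C i j) / γ))
      (Real.exp (-(H i j + lam * C i j) / γ) * (-C i j / γ)) lam := by
    intro i j
    have h : HasDerivAt (fun l : ℝ => -(H i j + l * C i j) / γ) (-C i j / γ) lam := by
      simpa using (((hasDerivAt_id lam).mul_const (C i j)).const_add (H i j)).neg.div_const γ
    exact h.exp
  have h3 : ∀ i, HasDerivAt (fun l : ℝ => Real.log (∑ j, Real.exp (-(H i j + l * C i j) / γ)))
      ((∑ j, Real.exp (-(H i j + lam * C i j) / γ) * (-C i j / γ)) /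
        (∑ j, Real.exp (-(H i j + lam * C i j) / γ))) lam := by
    intro i
    exact (HasDerivAt.fun_sum (fun j _ => h2 i j)).log (ne_of_gt (hZ i))
  have h4 : HasDerivAt (fun l : ℝ =>
      γ * ∑ i, x i * Real.log (∑ j, Real.exp (-(H i j + l * C i j) / γ)))
      (γ * ∑ i, x i *
        ((∑ j, Real.exp (-(H i j + lam * C i j) / γ) * (-C i j / γ)) /
          (∑ j, Real.exp (-(H i j + lam * C i j) / γ)))) lam :=
    (HasDerivAt.fun_sum (fun i _ => (h3 i).const_mul (x i))).const_mul γ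
  have := (h1.add_const
    (γ * ∑ i ∈ Finset.univ.filter (fun i => 0 < x i), x i * Real.log (x i))).sub h4
  exact this

lemma derivNeg {n : ℕ} (hn : 0 < n) (H C : Matrix (Fin n) (Fin n) ℝ)
    (hC0 : ∀ i j, 0 ≤ C i j) (hCd : ∀ i, C i i = 0)
    (x : Fin n → ℝ) (hx : ∀ i, 0 ≤ x i)
    (γ : ℝ) (hγ : 0 < γ) (δ : ℝ) (hδ : 0 < δ)
    (hxC : 0 < ∑ i, ∑ j, x i * C i j) (lam : ℝ)
    (hlam : ∀ i j : Fin n, i ≠ j →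
      Real.exp (-(H i j + lam * C i j) / γ - -(H i i) / γ)
        < δ / (∑ i, ∑ j, x i * C i j)) :
    deriv (smoothDual' H C x δ γ) lam < 0 := by
  rw [(hasDeriv_aux hn H C x γ δ lam).deriv]
  set E : Fin n → Fin n → ℝ := fun i j => Real.exp (-(H i j + lam * C i j) / γ) with hE
  set Z : Fin n → ℝ := fun i => ∑ j, E i j with hZdef
  set S := ∑ i, ∑ j, x i * C i j with hSdef
  have hZpos : ∀ i, 0 < Z i := fun i =>
    Finset.sum_pos (fun j _ => Real.exp_pos _) ⟨⟨0, hn⟩, Finset.mem_univ _⟩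
  have hNnn : ∀ i, 0 ≤ ∑ j, E i j * C i j := fun i =>
    Finset.sum_nonneg fun j _ => mul_nonneg (Real.exp_pos _).le (hC0 i j)
  have hZge : ∀ i, Real.exp (-(H i i) / γ) ≤ Z i := by
    intro i
    have h := Finset.single_le_sum (f := fun j => E i j)
      (fun j _ => (Real.exp_pos _).le) (Finset.mem_univ i)
    have he : E i i = Real.exp (-(H i i) / γ) := by simp [hE, hCd i]
    rw [← he]; exact h
  -- rewrite the derivative value
  have h2 : γ * ∑ i, x i * ((∑ j, E i j * (-C i j / γ)) / Z i)
      = -∑ i, x i * ((∑ j, E i j * C i j) / Z i) := by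
    rw [Finset.mul_sum, ← Finset.sum_neg_distrib]
    refine Finset.sum_congr rfl fun i _ => ?_
    have hnum : (∑ j, E i j * (-C i j / γ)) = (∑ j, E i j * C i j) * (-1 / γ) := by
      rw [Finset.sum_mul]
      exact Finset.sum_congr rfl fun j _ => by ring
    rw [hnum]
    linear_combination (-(x i * (∑ j, E i j * C i j) * (Z i)⁻¹)) * mul_inv_cancel₀ (ne_of_gt hγ)
  have key : ∑ i, x i * ((∑ j, E i j * C i j) / Z i) < δ := by
    have step1 : ∀ i, x i * ((∑ j, E i j * C i j) / Z i)
        ≤ ∑ j, x i * C i j * Real.exp (-(H i j + lam * C i j) / γ - -(H i i) / γ) := by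
      intro i
      have hd : (∑ j, E i j * C i j) / Z i
          ≤ (∑ j, E i j * C i j) / Real.exp (-(H i i) / γ) :=
        div_le_div_of_nonneg_left (hNnn i) (Real.exp_pos _) (hZge i)
      have heq : x i * ((∑ j, E i j * C i j) / Real.exp (-(H i i) / γ))
          = ∑ j, x i * C i j * Real.exp (-(H i j + lam * C i j) / γ - -(H i i) / γ) := by
        rw [Finset.sum_div, Finset.mul_sum]
        refine Finset.sum_congr rfl fun j _ => ?_
        rw [Real.exp_sub, hE]
        ring
      calc x i * ((∑ j, E i j * C i j) / Z i)
          ≤ x i * ((∑ j, E i j * C i j) / Real.exp (-(H i i) / γ)) :=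
            mul_le_mul_of_nonneg_left hd (hx i)
        _ = _ := heq
    have step2 : ∑ i, ∑ j, x i * C i j * Real.exp (-(H i j + lam * C i j) / γ - -(H i i) / γ)
        < δ := by
      have hfin : (∑ p : Fin n × Fin n, x p.1 * C p.1 p.2 * (δ / S)) = δ := by
        rw [← Finset.sum_mul]
        have : (∑ p : Fin n × Fin n, x p.1 * C p.1 p.2) = S := by
          rw [hSdef, ← Finset.sum_product']
          rfl
        rw [this]
        field_simp
      have hpair : ∃ p : Fin n × Fin n, 0 < x p.1 * C p.1 p.2 := by
        by_contra h
        push_neg at h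
        have : S ≤ 0 := by
          rw [hSdef, ← Finset.sum_product']
          exact Finset.sum_nonpos fun p _ => h p
        linarith
      obtain ⟨p0, hp0⟩ := hpair
      have hne : p0.1 ≠ p0.2 := by
        intro h
        rw [h, hCd, mul_zero] at hp0
        exact lt_irrefl _ hp0
      have hlt : ∀ p : Fin n × Fin n, p ∈ Finset.univ →
          x p.1 * C p.1 p.2 * Real.exp (-(H p.1 p.2 + lam * C p.1 p.2) / γ - -(H p.1 p.1) / γ)
          ≤ x p.1 * C p.1 p.2 * (δ / S) := by
        intro p _
        by_cases h : p.1 = p.2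
        · rw [h, hCd]; simp
        · exact mul_le_mul_of_nonneg_left (hlam p.1 p.2 h).le
            (mul_nonneg (hx p.1) (hC0 p.1 p.2))
      have hstrict : ∑ p : Fin n × Fin n,
          x p.1 * C p.1 p.2 * Real.exp (-(H p.1 p.2 + lam * C p.1 p.2) / γ - -(H p.1 p.1) / γ)
          < ∑ p : Fin n × Fin n, x p.1 * C p.1 p.2 * (δ / S) :=
        Finset.sum_lt_sum hlt ⟨p0, Finset.mem_univ _,
          (mul_lt_mul_iff_right₀ hp0).2 (hlam p0.1 p0.2 hne)⟩
      calc ∑ i, ∑ j, x i * C i j * Real.exp (-(H i j + lam * C i j) / γ - -(H i i) / γ)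
          = ∑ p : Fin n × Fin n,
            x p.1 * C p.1 p.2 * Real.exp (-(H p.1 p.2 + lam * C p.1 p.2) / γ - -(H p.1 p.1) / γ) := by
            rw [← Finset.sum_product']; rfl
        _ < ∑ p : Fin n × Fin n, x p.1 * C p.1 p.2 * (δ / S) := hstrict
        _ = δ := hfin
    calc ∑ i, x i * ((∑ j, E i j * C i j) / Z i)
        ≤ ∑ i, ∑ j, x i * C i j * Real.exp (-(H i j + lam * C i j) / γ - -(H i i) / γ) :=
          Finset.sum_le_sum fun i _ => step1 i
      _ < δ := step2
  linarith [h2, key]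


/-- for `λ` beyond the bound
`[2 max_{i,j}|H i j| + γ log((xᵀC1)/δ)]₊ / min_{i≠j} C i j`
the smooth dual has strictly negative derivative, and consequently any
maximizer `λ⋆ ≥ 0` of the smooth dual over `[0,∞)` satisfies `λ⋆ ≤` that bound. -/
theorem stmt_13 {n : ℕ} (hn : 2 ≤ n) (H C : Matrix (Fin n) (Fin n) ℝ)
    (hC0 : ∀ i j, 0 ≤ C i j) (hCd : ∀ i, C i i = 0)
    (hCo : ∀ i j : Fin n, i ≠ j → 0 < C i j)
    (x : Fin n → ℝ) (hx : ∀ i, 0 ≤ x i) (hxne : x ≠ 0)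
    (γ : ℝ) (hγ : 0 < γ) (δ : ℝ) (hδ : 0 < δ)
    (hxC : 0 < ∑ i, ∑ j, x i * C i j) :
    (∀ lam : ℝ,
      (max (2 * (Finset.univ.sup' ⟨(⟨0, by omega⟩, ⟨0, by omega⟩), Finset.mem_univ _⟩
              fun p : Fin n × Fin n => |H p.1 p.2|)
            + γ * Real.log ((∑ i, ∑ j, x i * C i j) / δ)) 0) /
          ((Finset.univ.filter fun p : Fin n × Fin n => p.1 ≠ p.2).inf'
            ⟨(⟨0, by omega⟩, ⟨1, by omega⟩), by
              refine Finset.mem_filter.mpr ⟨Finset.mem_univ _, ?_⟩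
              simp [Prod.ext_iff, Fin.ext_iff]⟩
            fun p => C p.1 p.2) < lam →
        deriv (smoothDual' H C x δ γ) lam < 0) ∧
    (∀ lamstar : ℝ, 0 ≤ lamstar →
      (∀ lam : ℝ, 0 ≤ lam → smoothDual' H C x δ γ lam ≤ smoothDual' H C x δ γ lamstar) →
      lamstar ≤
        (max (2 * (Finset.univ.sup' ⟨(⟨0, by omega⟩, ⟨0, by omega⟩), Finset.mem_univ _⟩
              fun p : Fin n × Fin n => |H p.1 p.2|)
            + γ * Real.log ((∑ i, ∑ j, x i * C i j) / δ)) 0) /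
          ((Finset.univ.filter fun p : Fin n × Fin n => p.1 ≠ p.2).inf'
            ⟨(⟨0, by omega⟩, ⟨1, by omega⟩), by
              refine Finset.mem_filter.mpr ⟨Finset.mem_univ _, ?_⟩
              simp [Prod.ext_iff, Fin.ext_iff]⟩
            fun p => C p.1 p.2)) := by
  have hn0 : 0 < n := by omega
  have hne1 : ((Finset.univ : Finset (Fin n × Fin n))).Nonempty :=
    ⟨(⟨0, by omega⟩, ⟨0, by omega⟩), Finset.mem_univ _⟩
  have hne2 : ((Finset.univ.filter fun p : Fin n × Fin n => p.1 ≠ p.2)).Nonempty :=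
    ⟨(⟨0, by omega⟩, ⟨1, by omega⟩), by
      refine Finset.mem_filter.mpr ⟨Finset.mem_univ _, ?_⟩
      simp [Prod.ext_iff, Fin.ext_iff]⟩
  set M := Finset.univ.sup' hne1 fun p : Fin n × Fin n => |H p.1 p.2| with hMdef
  set m := (Finset.univ.filter fun p : Fin n × Fin n => p.1 ≠ p.2).inf' hne2
    fun p => C p.1 p.2 with hmdef
  set S := ∑ i, ∑ j, x i * C i j with hSdef
  set B := max (2 * M + γ * Real.log (S / δ)) 0 / m with hBdef
  have hm : 0 < m := by
    rw [hmdef, Finset.lt_inf'_iff]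
    intro p hp
    exact hCo p.1 p.2 (Finset.mem_filter.mp hp).2
  have hB0 : 0 ≤ B := div_nonneg (le_max_right _ 0) hm.le
  have key : ∀ lam : ℝ, B < lam → deriv (smoothDual' H C x δ γ) lam < 0 := by
    intro lam hBlam
    refine derivNeg hn0 H C hC0 hCd x hx γ hγ δ hδ hxC lam ?_
    intro i j hij
    have hlam0 : 0 ≤ lam := le_trans hB0 hBlam.le
    have hmle : m ≤ C i j :=
      Finset.inf'_le _ (Finset.mem_filter.mpr ⟨Finset.mem_univ (i, j), hij⟩)
    have f1 : max (2 * M + γ * Real.log (S / δ)) 0 < lam * C i j := by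
      calc max (2 * M + γ * Real.log (S / δ)) 0 = B * m := by
            rw [hBdef, div_mul_cancel₀ _ (ne_of_gt hm)]
        _ < lam * m := by exact mul_lt_mul_of_pos_right hBlam hm
        _ ≤ lam * C i j := mul_le_mul_of_nonneg_left hmle hlam0
    have f2 : 2 * M + γ * Real.log (S / δ) ≤ max (2 * M + γ * Real.log (S / δ)) 0 :=
      le_max_left _ _
    have f3 : H i i ≤ M := le_trans (le_abs_self _)
      (Finset.le_sup' (f := fun p : Fin n × Fin n => |H p.1 p.2|) (Finset.mem_univ (i, i)))
    have f4 : -H i j ≤ M := le_trans (neg_le_abs _)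
      (Finset.le_sup' (f := fun p : Fin n × Fin n => |H p.1 p.2|) (Finset.mem_univ (i, j)))
    have f5 : Real.log (S / δ) = Real.log S - Real.log δ :=
      Real.log_div (ne_of_gt hxC) (ne_of_gt hδ)
    have hc : 0 < δ / S := div_pos hδ hxC
    rw [← Real.lt_log_iff_exp_lt hc]
    have f6 : Real.log (δ / S) = Real.log δ - Real.log S :=
      Real.log_div (ne_of_gt hδ) (ne_of_gt hxC)
    rw [f6, div_sub_div_same, div_lt_iff₀ hγ]
    rw [f5] at f1 f2
    nlinarith [f1, f2, f3, f4]
  constructor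
  · intro lam h
    exact key lam h
  · intro lamstar h0 hmax
    by_contra hgt
    push_neg at hgt
    have hBlt : B < lamstar := hgt
    have hpos : 0 < lamstar := lt_of_le_of_lt hB0 hBlt
    have hloc : IsLocalMax (smoothDual' H C x δ γ) lamstar := by
      have hev : ∀ᶠ lam in nhds lamstar, 0 < lam := eventually_gt_nhds hpos
      exact hev.mono fun lam hl => hmax lam hl.le
    have hd0 : deriv (smoothDual' H C x δ γ) lamstar = 0 := hloc.deriv_eq_zero
    have := key lamstar hBlt
    linarith
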